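/- Fix p ∈ {0,…,h̄−1}, assume u − v + 1 ≤ b ≤ u and d̄ + 1 ≤ n̄ − h̄, and let R' ⊆ {0,…,n̄−1}∖F with |R'| = d̄ + 1. Let c and c' be two codewords of C̃ such that H_{i_p,j}(a,m)[c] = H_{i_p,j}(a,m)[c'] for every j ∈ R', every m ∈ {u−v,…,b−1} and every a ∈ {0,…,s̄^n̄ − 1}. Then: (i) ∑_{g=0}^{u−1} θ^{g·m}·c(i_p·u+g, a, (p+x) mod L) = ∑_{g=0}^{u−1} θ^{g·m}·c'(i_p·u+g, a, (p+x) mod L) for every x ∈ {0,…,s̄−1}, every m ∈ {u−v,…,b−1} and every a; and (ii) H_{i_p,i}(a,m)[c] = H_{i_p,i}(a,m)[c'] for every i ∈ F∖{i_p}, every m ∈ {u−v,…,b−1} and every a. -/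

import Mathlib

/-- Replace the `i`-th digit of the `s`-ary expansion of `a` by `x`
(the paper's notation `a(i, x)`). -/
def replaceDigit (s a i x : ℕ) : ℕ := a - a / s ^ i % s * s ^ i + x * s ^ i

/-- The combined symbol `H_{i_p, j}(a, m)[c]` of the paper:
`∑_{x=0}^{sbar−1} ∑_{g=0}^{u−1} θ^{g·m} · c(j·u+g, a(i_p, a_{i_p} ⊕ x), (p+x) mod L)`,
where `ip` is the rack index `i_p`, `⊕` denotes addition modulo `sbar`, and the layer
index is taken modulo `L`. -/
def Hval {𝔽 : Type*} [Field 𝔽] (θ : 𝔽) (sbar u L ip p j m : ℕ)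
    (c : ℕ → ℕ → ℕ → 𝔽) (a : ℕ) : 𝔽 :=
  ∑ x ∈ Finset.range sbar, ∑ g ∈ Finset.range u,
    θ ^ (g * m) *
      c (j * u + g) (replaceDigit sbar a ip ((a / sbar ^ ip % sbar + x) % sbar))
        ((p + x) % L)

/-- **Lemma 1(2) of the paper** (download phase, case `u − v + 1 ≤ b ≤ u`, using
`dbar + 1` helper racks `R'`): if two codewords `c, c'` of the stacked code `C̃` give
the same downloaded symbols `H_{i_p,j}(a,m)` for all `j ∈ R'`, all
`m ∈ {u−v, …, b−1}` and all `a < sbar^nbar`, then they agree on (i) the combinations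
`∑_g θ^{g·m}·c(i_p·u+g, a, (p+x) mod L)` for `x < sbar`, and
(ii) the symbols `H_{i_p,i}(a,m)` for every other host rack `i ∈ F∖{i_p}`,
for all `m ∈ {u−v, …, b−1}`. -/
lemma self_decomp (s a i : ℕ) :
    a = a / s ^ (i+1) * s * s ^ i + a / s ^ i % s * s ^ i + a % s ^ i := by
  conv_lhs => rw [← Nat.div_add_mod a (s ^ i)]
  conv_lhs => rw [← Nat.div_add_mod (a / s ^ i) s]
  rw [Nat.div_div_eq_div_mul, ← pow_succ]
  ring

lemma digit_mod (s a : ℕ) {i j : ℕ} (hs : 0 < s) (h : j < i) :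
    a / s ^ j % s = a % s ^ i / s ^ j % s := by
  have hsj : 0 < s ^ j := Nat.pow_pos hs
  conv_lhs => rw [← Nat.div_add_mod a (s ^ i)]
  have hi : s ^ i = s ^ j * s ^ (i - j) := by
    rw [← pow_add]; congr 1; omega
  rw [hi, mul_assoc, Nat.mul_add_div hsj, Nat.add_comm]
  have hij : s ^ (i - j) = s * s ^ (i - j - 1) := by
    rw [← pow_succ']; congr 1; omega
  rw [hij]
  conv_lhs => rw [show s * s ^ (i-j-1) * (a / (s^j * (s*s^(i-j-1)))) =
    (s ^ (i-j-1) * (a / (s^j * (s*s^(i-j-1))))) * s by ring]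
  rw [Nat.add_mul_mod_self_right]

lemma replaceDigit_eq (s a i x : ℕ) :
    replaceDigit s a i x = (a / s ^ (i+1) * s + x) * s ^ i + a % s ^ i := by
  unfold replaceDigit
  have h5 : a - a / s ^ i % s * s ^ i = a / s ^ (i+1) * s * s ^ i + a % s ^ i := by
    apply Nat.sub_eq_of_eq_add
    conv_lhs => rw [self_decomp s a i]
    ring
  rw [h5]; ring

lemma replaceDigit_mod (s a i : ℕ) {x : ℕ} (hx : x < s) :
    replaceDigit s a i x % s ^ i = a % s ^ i := by
  rw [replaceDigit_eq, Nat.mul_add_mod']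
  exact Nat.mod_mod_of_dvd _ dvd_rfl

lemma replaceDigit_div (s a i : ℕ) {x : ℕ} (hx : x < s) :
    replaceDigit s a i x / s ^ i = a / s ^ (i+1) * s + x := by
  have hs : 0 < s := Nat.lt_of_le_of_lt (Nat.zero_le _) hx
  have hsi : 0 < s ^ i := Nat.pow_pos hs
  rw [replaceDigit_eq, mul_comm _ (s ^ i), Nat.mul_add_div hsi,
    Nat.div_eq_of_lt (Nat.mod_lt _ hsi), Nat.add_zero]

lemma replaceDigit_div_pow_succ (s a i : ℕ) {x : ℕ} (hx : x < s) :
    replaceDigit s a i x / s ^ (i+1) = a / s ^ (i+1) := by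
  have hs : 0 < s := Nat.lt_of_le_of_lt (Nat.zero_le _) hx
  rw [pow_succ, ← Nat.div_div_eq_div_mul, ← Nat.div_div_eq_div_mul,
    replaceDigit_div s a i hx, Nat.div_div_eq_div_mul, ← pow_succ,
    Nat.add_comm, Nat.add_mul_div_right _ _ hs, Nat.div_eq_of_lt hx, Nat.zero_add]

lemma digit_replaceDigit_self (s a i : ℕ) {x : ℕ} (hx : x < s) :
    replaceDigit s a i x / s ^ i % s = x := by
  rw [replaceDigit_div s a i hx, Nat.add_comm, Nat.add_mul_mod_self_right,
    Nat.mod_eq_of_lt hx]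

lemma digit_replaceDigit_ne (s a i : ℕ) {x j : ℕ} (hx : x < s) (hj : j ≠ i) :
    replaceDigit s a i x / s ^ j % s = a / s ^ j % s := by
  have hs : 0 < s := Nat.lt_of_le_of_lt (Nat.zero_le _) hx
  rcases lt_or_gt_of_ne hj with h | h
  · rw [digit_mod s _ hs h, digit_mod s a hs h, replaceDigit_mod s a i hx]
  · have h2 : replaceDigit s a i x / s ^ j = a / s ^ j := by
      have hji : j = (i+1) + (j - (i+1)) := by omega
      rw [hji, pow_add, ← Nat.div_div_eq_div_mul, ← Nat.div_div_eq_div_mul,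
        replaceDigit_div_pow_succ s a i hx]
    rw [h2]

lemma replaceDigit_lt {s a i n x : ℕ} (ha : a < s ^ n) (hi : i < n) (hx : x < s) :
    replaceDigit s a i x < s ^ n := by
  have hs : 0 < s := Nat.lt_of_le_of_lt (Nat.zero_le _) hx
  have hsi : 0 < s ^ (i+1) := Nat.pow_pos hs
  have h2 : a / s ^ (i+1) < s ^ (n - (i+1)) := by
    rw [Nat.div_lt_iff_lt_mul hsi, ← pow_add]
    calc a < s ^ n := ha
    _ ≤ s ^ (n - (i+1) + (i+1)) := by
        apply Nat.pow_le_pow_right (Nat.one_le_iff_ne_zero.mpr (by omega)); omega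
  have e1 : s ^ (i+1) * (a / s ^ (i+1)) + replaceDigit s a i x % s ^ (i+1)
      = replaceDigit s a i x := by
    conv_rhs => rw [← Nat.div_add_mod (replaceDigit s a i x) (s ^ (i+1))]
    rw [replaceDigit_div_pow_succ s a i hx]
  have hm : replaceDigit s a i x % s ^ (i+1) < s ^ (i+1) := Nat.mod_lt _ hsi
  have e2 : s ^ (i+1) * (a / s ^ (i+1)) + s ^ (i+1) ≤ s ^ (i+1) * s ^ (n - (i+1)) := by
    have : s ^ (i+1) * (a / s ^ (i+1) + 1) ≤ s ^ (i+1) * s ^ (n - (i+1)) :=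
      Nat.mul_le_mul_left _ (by omega)
    calc s ^ (i+1) * (a / s ^ (i+1)) + s ^ (i+1) = s ^ (i+1) * (a / s ^ (i+1) + 1) := by ring
    _ ≤ _ := this
  have e3 : s ^ (i+1) * s ^ (n - (i+1)) = s ^ n := by rw [← pow_add]; congr 1; omega
  omega

lemma replaceDigit_digit (s a i : ℕ) : replaceDigit s a i (a / s ^ i % s) = a := by
  rw [replaceDigit_eq]
  calc (a / s ^ (i+1) * s + a / s ^ i % s) * s ^ i + a % s ^ i
      = a / s ^ (i+1) * s * s ^ i + a / s ^ i % s * s ^ i + a % s ^ i := by ring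
  _ = a := (self_decomp s a i).symm

lemma replaceDigit_replaceDigit (s a i : ℕ) {x : ℕ} (y : ℕ) (hx : x < s) :
    replaceDigit s (replaceDigit s a i x) i y = replaceDigit s a i y := by
  rw [replaceDigit_eq, replaceDigit_eq s a i y, replaceDigit_div_pow_succ s a i hx,
    replaceDigit_mod s a i hx]

lemma pow_inj_field {𝔽 : Type*} [Field 𝔽] {ξ : 𝔽} (hξ0 : ξ ≠ 0) :
    ∀ {c d : ℕ}, c < orderOf ξ → d < orderOf ξ → ξ ^ c = ξ ^ d → c = d := by
  have key : ∀ c d : ℕ, c ≤ d → d < orderOf ξ → ξ ^ c = ξ ^ d → c = d := by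
    intro c d hle hd h
    have h1 : ξ ^ c * ξ ^ (d - c) = ξ ^ c * 1 := by
      rw [mul_one, ← pow_add, show c + (d - c) = d by omega, h]
    have h2 : ξ ^ (d - c) = 1 := mul_left_cancel₀ (pow_ne_zero _ hξ0) h1
    have h3 := orderOf_dvd_of_pow_eq_one h2
    rcases Nat.eq_zero_or_pos (d - c) with h0 | h0
    · omega
    · exact absurd (Nat.le_of_dvd h0 h3) (by omega)
  intro c d hc hd h
  rcases Nat.le_total c d with hle | hle
  · exact key c d hle hd h
  · exact (key d c hle hc h.symm).symm

lemma base_lt {i dd s n : ℕ} (hi : i < n) (hd : dd < s) : i * s + dd < n * s := by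
  calc i * s + dd < i * s + s := by omega
  _ = (i + 1) * s := by ring
  _ ≤ n * s := Nat.mul_le_mul_right _ (by omega)

lemma base_inj {s i1 i2 d1 d2 : ℕ} (h1 : d1 < s) (h2 : d2 < s)
    (h : i1 * s + d1 = i2 * s + d2) : i1 = i2 ∧ d1 = d2 := by
  have hs : 0 < s := by omega
  have e1 : ∀ i dd : ℕ, dd < s → (i * s + dd) / s = i := by
    intro i dd hd
    rw [Nat.add_comm, Nat.add_mul_div_right _ _ hs, Nat.div_eq_of_lt hd, Nat.zero_add]
  have hi : i1 = i2 := by rw [← e1 i1 d1 h1, ← e1 i2 d2 h2, h]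
  subst hi
  exact ⟨rfl, by omega⟩

lemma mainLemma {𝔽 : Type*} [Field 𝔽]
    (nbar u kbar dbar v b r sbar L : ℕ)
    (hu : 0 < u) (hv : v < u) (hb2 : b ≤ u)
    (hd1 : kbar ≤ dbar) (hnk : dbar + 2 ≤ nbar)
    (hsbar : sbar = dbar - kbar + 1) (hL0 : 0 < L)
    (hr : r = (nbar - kbar) * u - v)
    (ξ θ : 𝔽) (hord : nbar * sbar * u ≤ orderOf ξ) (hξ0 : ξ ≠ 0) (hθ : orderOf θ = u)
    (ip : ℕ) (hipn : ip < nbar)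
    (R' : Finset ℕ) (hR' : R'.card = dbar + 1) (hRn : ∀ j ∈ R', j < nbar)
    (hipR : ip ∉ R')
    (p : ℕ)
    (e : ℕ → ℕ → ℕ → 𝔽)
    (he : ∀ t < r, ∀ a < sbar ^ nbar, ∀ y < L,
      ∑ i ∈ Finset.range nbar, ∑ g ∈ Finset.range u,
        θ ^ (g * t) * (ξ ^ (i * sbar + a / sbar ^ i % sbar)) ^ t * e (i * u + g) a y = 0)
    (m : ℕ) (hm2 : m < u)
    (a : ℕ) (ha : a < sbar ^ nbar)
    (hHe : ∀ j ∈ R', Hval θ sbar u L ip p j m e a = 0) :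
    (∀ x < sbar, ∑ g ∈ Finset.range u, θ ^ (g * m) * e (ip * u + g)
        (replaceDigit sbar a ip ((a / sbar ^ ip % sbar + x) % sbar)) ((p + x) % L) = 0)
    ∧ ∀ i < nbar, i ∉ R' → i ≠ ip → Hval θ sbar u L ip p i m e a = 0 := by
  classical
  have hsbar0 : 0 < sbar := by omega
  set N := nbar - kbar - 1 with hN
  set S : Finset ℕ := Finset.range nbar \ insert ip R' with hS
  have hsub : insert ip R' ⊆ Finset.range nbar := by
    intro j hj
    rcases Finset.mem_insert.mp hj with h | h
    · subst h; exact Finset.mem_range.mpr hipn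
    · exact Finset.mem_range.mpr (hRn j h)
  have hScard : S.card = nbar - (dbar + 2) := by
    rw [hS, Finset.card_sdiff_of_subset hsub, Finset.card_insert_of_notMem hipR, hR',
      Finset.card_range]
  have hSmem : ∀ i ∈ S, i < nbar ∧ i ∉ R' ∧ i ≠ ip := by
    intro i hi
    rw [hS, Finset.mem_sdiff, Finset.mem_insert, Finset.mem_range] at hi
    tauto
  have hcardι : Fintype.card ({i // i ∈ S} ⊕ Fin sbar) = N := by
    rw [Fintype.card_sum, Fintype.card_coe, Fintype.card_fin, hScard]
    omega
  -- exponents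
  set E : {i // i ∈ S} ⊕ Fin sbar → ℕ := Sum.elim
    (fun i => (i : ℕ) * sbar + a / sbar ^ (i : ℕ) % sbar)
    (fun x => ip * sbar + (a / sbar ^ ip % sbar + (x : ℕ)) % sbar) with hE
  have hdig : ∀ i : ℕ, a / sbar ^ i % sbar < sbar := fun i => Nat.mod_lt _ hsbar0
  have hElt : ∀ i, E i < nbar * sbar := by
    rintro (i | x)
    · exact base_lt (hSmem i i.2).1 (hdig _)
    · exact base_lt hipn (Nat.mod_lt _ hsbar0)
  have hEinj : Function.Injective E := by
    rintro (i1 | x1) (i2 | x2) h <;> simp only [hE, Sum.elim_inl, Sum.elim_inr] at h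
    · obtain ⟨h1, -⟩ := base_inj (hdig _) (hdig _) h
      exact congrArg Sum.inl (Subtype.ext h1)
    · obtain ⟨h1, -⟩ := base_inj (hdig _) (Nat.mod_lt _ hsbar0) h
      exact absurd h1 (hSmem i1 i1.2).2.2
    · obtain ⟨h1, -⟩ := base_inj (Nat.mod_lt _ hsbar0) (hdig _) h
      exact absurd h1.symm (hSmem i2 i2.2).2.2
    · obtain ⟨-, h2⟩ := base_inj (Nat.mod_lt _ hsbar0) (Nat.mod_lt _ hsbar0) h
      have h3 : (x1 : ℕ) % sbar = (x2 : ℕ) % sbar :=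
        Nat.ModEq.add_left_cancel' _ h2
      rw [Nat.mod_eq_of_lt x1.isLt, Nat.mod_eq_of_lt x2.isLt] at h3
      exact congrArg Sum.inr (Fin.ext h3)
  set μ : {i // i ∈ S} ⊕ Fin sbar → 𝔽 := fun i => ξ ^ E i with hμ
  have hμ0 : ∀ i, μ i ≠ 0 := fun i => pow_ne_zero _ hξ0
  have hμuinj : Function.Injective (fun i => μ i ^ u) := by
    intro i1 i2 h
    simp only [hμ, ← pow_mul] at h
    have h1 : E i1 * u = E i2 * u :=
      pow_inj_field hξ0
        (lt_of_lt_of_le ((Nat.mul_lt_mul_right hu).mpr (hElt i1)) hord)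
        (lt_of_lt_of_le ((Nat.mul_lt_mul_right hu).mpr (hElt i2)) hord) h
    exact hEinj (Nat.eq_of_mul_eq_mul_right hu h1)
  set w : {i // i ∈ S} ⊕ Fin sbar → 𝔽 := Sum.elim
    (fun i => Hval θ sbar u L ip p (i : ℕ) m e a)
    (fun x => ∑ g ∈ Finset.range u, θ ^ (g * m) * e (ip * u + g)
        (replaceDigit sbar a ip ((a / sbar ^ ip % sbar + (x : ℕ)) % sbar))
        ((p + (x : ℕ)) % L)) with hw
  -- the linear system
  have hsys : ∀ s : Fin N, (∑ i : {i // i ∈ S} ⊕ Fin sbar,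
      w i * μ i ^ (m + (s : ℕ) * u)) = 0 := by
    intro s
    have hs2 : (s : ℕ) ≤ nbar - kbar - 2 := by have := s.isLt; omega
    have ht : m + (s : ℕ) * u < r := by
      have hmul : (s : ℕ) * u ≤ (nbar - kbar - 2) * u := Nat.mul_le_mul_right _ hs2
      have h2 : (nbar - kbar - 2) * u + 2 * u = (nbar - kbar) * u := by
        rw [← add_mul]; congr 1; omega
      omega
    set t := m + (s : ℕ) * u with htdef
    have hθgt : ∀ g : ℕ, θ ^ (g * t) = θ ^ (g * m) := by
      intro g
      have hθu : θ ^ u = 1 := by rw [← hθ]; exact pow_orderOf_eq_one θ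
      calc θ ^ (g * t) = θ ^ (g * m) * (θ ^ u) ^ (g * (s : ℕ)) := by
            rw [← pow_mul, ← pow_add]; congr 1; rw [htdef]; ring
      _ = θ ^ (g * m) := by rw [hθu, one_pow, mul_one]
    have hax : ∀ x : ℕ,
        replaceDigit sbar a ip ((a / sbar ^ ip % sbar + x) % sbar) < sbar ^ nbar :=
      fun x => replaceDigit_lt ha hipn (Nat.mod_lt _ hsbar0)
    have Esum : ∑ x ∈ Finset.range sbar, ∑ i ∈ Finset.range nbar,
        ∑ g ∈ Finset.range u,
        θ ^ (g * t) * (ξ ^ (i * sbar +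
          (replaceDigit sbar a ip ((a / sbar ^ ip % sbar + x) % sbar)) / sbar ^ i % sbar)) ^ t
          * e (i * u + g) (replaceDigit sbar a ip ((a / sbar ^ ip % sbar + x) % sbar))
            ((p + x) % L) = 0 :=
      Finset.sum_eq_zero fun x _ => he t ht _ (hax x) _ (Nat.mod_lt _ hL0)
    rw [Finset.sum_comm] at Esum
    have Esum2 : ∑ i ∈ Finset.range nbar, (∑ x ∈ Finset.range sbar,
        (ξ ^ (i * sbar +
          (replaceDigit sbar a ip ((a / sbar ^ ip % sbar + x) % sbar)) / sbar ^ i % sbar)) ^ t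
          * ∑ g ∈ Finset.range u, θ ^ (g * m)
            * e (i * u + g) (replaceDigit sbar a ip ((a / sbar ^ ip % sbar + x) % sbar))
              ((p + x) % L)) = 0 := by
      rw [← Esum]
      refine Finset.sum_congr rfl fun i _ => Finset.sum_congr rfl fun x _ => ?_
      rw [Finset.mul_sum]
      refine Finset.sum_congr rfl fun g _ => ?_
      rw [hθgt g]; ring
    -- the common inner expression, for i ≠ ip
    have hfne : ∀ i : ℕ, i ≠ ip → (∑ x ∈ Finset.range sbar,
        (ξ ^ (i * sbar +
          (replaceDigit sbar a ip ((a / sbar ^ ip % sbar + x) % sbar)) / sbar ^ i % sbar)) ^ t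
          * ∑ g ∈ Finset.range u, θ ^ (g * m)
            * e (i * u + g) (replaceDigit sbar a ip ((a / sbar ^ ip % sbar + x) % sbar))
              ((p + x) % L))
        = (ξ ^ (i * sbar + a / sbar ^ i % sbar)) ^ t * Hval θ sbar u L ip p i m e a := by
      intro i hne
      rw [Hval, Finset.mul_sum]
      refine Finset.sum_congr rfl fun x _ => ?_
      rw [digit_replaceDigit_ne sbar a ip (Nat.mod_lt _ hsbar0) hne]
    have hfip : (∑ x ∈ Finset.range sbar,
        (ξ ^ (ip * sbar +
          (replaceDigit sbar a ip ((a / sbar ^ ip % sbar + x) % sbar)) / sbar ^ ip % sbar)) ^ t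
          * ∑ g ∈ Finset.range u, θ ^ (g * m)
            * e (ip * u + g) (replaceDigit sbar a ip ((a / sbar ^ ip % sbar + x) % sbar))
              ((p + x) % L))
        = ∑ x ∈ Finset.range sbar,
          (ξ ^ (ip * sbar + (a / sbar ^ ip % sbar + x) % sbar)) ^ t
          * ∑ g ∈ Finset.range u, θ ^ (g * m)
            * e (ip * u + g) (replaceDigit sbar a ip ((a / sbar ^ ip % sbar + x) % sbar))
              ((p + x) % L) := by
      refine Finset.sum_congr rfl fun x _ => ?_
      rw [digit_replaceDigit_self sbar a ip (Nat.mod_lt _ hsbar0)]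
    rw [← Finset.sum_sdiff hsub, Finset.sum_insert hipR, ← hS] at Esum2
    -- kill R' terms
    have hRzero : ∑ i ∈ R', (∑ x ∈ Finset.range sbar,
        (ξ ^ (i * sbar +
          (replaceDigit sbar a ip ((a / sbar ^ ip % sbar + x) % sbar)) / sbar ^ i % sbar)) ^ t
          * ∑ g ∈ Finset.range u, θ ^ (g * m)
            * e (i * u + g) (replaceDigit sbar a ip ((a / sbar ^ ip % sbar + x) % sbar))
              ((p + x) % L)) = 0 := by
      refine Finset.sum_eq_zero fun i hi => ?_
      have hne : i ≠ ip := fun h => hipR (h ▸ hi)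
      rw [hfne i hne, hHe i hi, mul_zero]
    rw [hfip, hRzero, add_zero] at Esum2
    have hSrw : ∑ i ∈ S, (∑ x ∈ Finset.range sbar,
        (ξ ^ (i * sbar +
          (replaceDigit sbar a ip ((a / sbar ^ ip % sbar + x) % sbar)) / sbar ^ i % sbar)) ^ t
          * ∑ g ∈ Finset.range u, θ ^ (g * m)
            * e (i * u + g) (replaceDigit sbar a ip ((a / sbar ^ ip % sbar + x) % sbar))
              ((p + x) % L))
        = ∑ i ∈ S, (ξ ^ (i * sbar + a / sbar ^ i % sbar)) ^ t
            * Hval θ sbar u L ip p i m e a :=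
      Finset.sum_congr rfl fun i hi => hfne i (hSmem i hi).2.2
    rw [hSrw] at Esum2
    -- now convert the goal sum
    rw [Fintype.sum_sum_type]
    have hgoal1 : ∑ i : {i // i ∈ S}, w (Sum.inl i) * μ (Sum.inl i) ^ t
        = ∑ i ∈ S, (ξ ^ (i * sbar + a / sbar ^ i % sbar)) ^ t
            * Hval θ sbar u L ip p i m e a := by
      rw [← Finset.sum_coe_sort S
        (fun i => (ξ ^ (i * sbar + a / sbar ^ i % sbar)) ^ t
          * Hval θ sbar u L ip p i m e a)]
      refine Finset.sum_congr rfl fun i _ => ?_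
      simp only [hw, hμ, hE, Sum.elim_inl]
      ring
    have hgoal2 : ∑ x : Fin sbar, w (Sum.inr x) * μ (Sum.inr x) ^ t
        = ∑ x ∈ Finset.range sbar,
          (ξ ^ (ip * sbar + (a / sbar ^ ip % sbar + x) % sbar)) ^ t
          * ∑ g ∈ Finset.range u, θ ^ (g * m)
            * e (ip * u + g) (replaceDigit sbar a ip ((a / sbar ^ ip % sbar + x) % sbar))
              ((p + x) % L) := by
      rw [← Fin.sum_univ_eq_sum_range (fun x =>
        (ξ ^ (ip * sbar + (a / sbar ^ ip % sbar + x) % sbar)) ^ t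
          * ∑ g ∈ Finset.range u, θ ^ (g * m)
            * e (ip * u + g) (replaceDigit sbar a ip ((a / sbar ^ ip % sbar + x) % sbar))
              ((p + x) % L)) sbar]
      refine Finset.sum_congr rfl fun x _ => ?_
      simp only [hw, hμ, hE, Sum.elim_inr]
      ring
    rw [hgoal1, hgoal2]
    exact Esum2
  -- solve the Vandermonde system
  set eqv := Fintype.equivFinOfCardEq hcardι with heqv
  have hfinj : Function.Injective (fun j : Fin N => μ (eqv.symm j) ^ u) :=
    fun j1 j2 h => eqv.symm.injective (hμuinj h)
  have hsys2 : ∀ s : Fin N, ∑ j : Fin N,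
      (w (eqv.symm j) * μ (eqv.symm j) ^ m) * (μ (eqv.symm j) ^ u) ^ (s : ℕ) = 0 := by
    intro s
    rw [← hsys s]
    rw [← Equiv.sum_comp eqv.symm (fun i => w i * μ i ^ (m + (s : ℕ) * u))]
    have hterm : ∀ (z y : 𝔽) (c1 c2 c3 : ℕ),
        z * y ^ (c1 + c2 * c3) = (z * y ^ c1) * (y ^ c3) ^ c2 := by
      intros z y c1 c2 c3
      rw [mul_assoc, ← pow_mul, ← pow_add, Nat.mul_comm c3 c2]
    exact Finset.sum_congr rfl fun j _ => (hterm (w (eqv.symm j)) (μ (eqv.symm j)) m (s : ℕ) u).symm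
  have hzero : (fun j : Fin N => w (eqv.symm j) * μ (eqv.symm j) ^ m) = 0 :=
    Matrix.eq_zero_of_forall_pow_sum_mul_pow_eq_zero hfinj hsys2
  have hwzero : ∀ i, w i = 0 := by
    intro i
    have h1 := congrFun hzero (eqv i)
    simp only [Equiv.symm_apply_apply, Pi.zero_apply] at h1
    exact (mul_eq_zero.mp h1).resolve_right (pow_ne_zero _ (hμ0 i))
  constructor
  · intro x hx
    exact hwzero (Sum.inr ⟨x, hx⟩)
  · intro i hin hiR hiip
    have hiS : i ∈ S := by
      rw [hS, Finset.mem_sdiff, Finset.mem_insert, Finset.mem_range]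
      tauto
    exact hwzero (Sum.inl ⟨i, hiS⟩)

lemma Hval_sub {𝔽 : Type*} [Field 𝔽] (θ : 𝔽) (sbar u L ip p j m : ℕ)
    (c c' : ℕ → ℕ → ℕ → 𝔽) (a : ℕ) :
    Hval θ sbar u L ip p j m (fun i a y => c i a y - c' i a y) a
      = Hval θ sbar u L ip p j m c a - Hval θ sbar u L ip p j m c' a := by
  simp [Hval, mul_sub, Finset.sum_sub_distrib]

theorem stmt12 {𝔽 : Type*} [Field 𝔽] [Fintype 𝔽]
    (nbar u kbar hbar dbar δ v b : ℕ)
    (hnbar : 0 < nbar) (hu : 0 < u) (hkbar : 0 < kbar) (hhbar : 0 < hbar)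
    (hδ1 : 1 ≤ δ) (hδ2 : δ ≤ hbar - 1)
    (hv : v < u) (hb1 : u - v + 1 ≤ b) (hb2 : b ≤ u)
    (hd1 : kbar ≤ dbar) (hd2 : dbar + 1 ≤ nbar - hbar) (hhn : hbar ≤ nbar)
    (k n r sbar L : ℕ)
    (hk : k = kbar * u + v) (hn : n = nbar * u) (hr : r = n - k)
    (hsbar : sbar = dbar - kbar + 1) (hL : L = sbar + hbar - δ)
    (hcard : n * sbar + 1 ≤ Fintype.card 𝔽) (hdvd : u ∣ Fintype.card 𝔽 - 1)
    (ξ θ : 𝔽) (hξ : orderOf ξ = Fintype.card 𝔽 - 1) (hθ : orderOf θ = u)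
    -- the host racks `i₀ < i₁ < … < i_{hbar−1}`, given by `iF 0, …, iF (hbar−1)`
    (iF : ℕ → ℕ) (hiF : StrictMonoOn iF (Set.Iio hbar)) (hiFn : ∀ q < hbar, iF q < nbar)
    -- the enlarged set `R'` of `dbar + 1` helper racks
    (R' : Finset ℕ) (hR' : R'.card = dbar + 1) (hRn : ∀ j ∈ R', j < nbar)
    (hRF : ∀ j ∈ R', ∀ q < hbar, j ≠ iF q)
    -- two codewords of the stacked MDS array code `C̃`
    (c c' : ℕ → ℕ → ℕ → 𝔽)
    (hc : ∀ t < r, ∀ a < sbar ^ nbar, ∀ y < L,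
      ∑ i ∈ Finset.range nbar, ∑ g ∈ Finset.range u,
        θ ^ (g * t) * (ξ ^ (i * sbar + a / sbar ^ i % sbar)) ^ t * c (i * u + g) a y = 0)
    (hc' : ∀ t < r, ∀ a < sbar ^ nbar, ∀ y < L,
      ∑ i ∈ Finset.range nbar, ∑ g ∈ Finset.range u,
        θ ^ (g * t) * (ξ ^ (i * sbar + a / sbar ^ i % sbar)) ^ t * c' (i * u + g) a y = 0)
    (p : ℕ) (hp : p < hbar)
    -- the downloaded symbols agree
    (hH : ∀ j ∈ R', ∀ m, u - v ≤ m → m < b → ∀ a < sbar ^ nbar,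
      Hval θ sbar u L (iF p) p j m c a = Hval θ sbar u L (iF p) p j m c' a) :
    (∀ x < sbar, ∀ m, u - v ≤ m → m < b → ∀ a < sbar ^ nbar,
      ∑ g ∈ Finset.range u, θ ^ (g * m) * c (iF p * u + g) a ((p + x) % L)
        = ∑ g ∈ Finset.range u, θ ^ (g * m) * c' (iF p * u + g) a ((p + x) % L))
    ∧ (∀ q < hbar, q ≠ p → ∀ m, u - v ≤ m → m < b → ∀ a < sbar ^ nbar,
      Hval θ sbar u L (iF p) p (iF q) m c a = Hval θ sbar u L (iF p) p (iF q) m c' a) := by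
  -- the difference codeword
  set e : ℕ → ℕ → ℕ → 𝔽 := fun i a y => c i a y - c' i a y with he_def
  have he : ∀ t < r, ∀ a < sbar ^ nbar, ∀ y < L,
      ∑ i ∈ Finset.range nbar, ∑ g ∈ Finset.range u,
        θ ^ (g * t) * (ξ ^ (i * sbar + a / sbar ^ i % sbar)) ^ t * e (i * u + g) a y = 0 := by
    intro t ht a ha y hy
    have h1 := hc t ht a ha y hy
    have h2 := hc' t ht a ha y hy
    simp only [he_def, mul_sub, Finset.sum_sub_distrib]
    rw [h1, h2, sub_zero]
  -- numeric facts
  have hsbar0 : 0 < sbar := by omega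
  have hL0 : 0 < L := by omega
  have hnk : dbar + 2 ≤ nbar := by omega
  have hkn : kbar ≤ nbar := by omega
  have hr' : r = (nbar - kbar) * u - v := by
    have e1 : (nbar - kbar) * u + kbar * u = nbar * u := by
      rw [← add_mul, Nat.sub_add_cancel hkn]
    omega
  have hord : nbar * sbar * u ≤ orderOf ξ := by
    have e1 : nbar * sbar * u = n * sbar := by rw [hn]; ring
    omega
  have hξ0 : ξ ≠ 0 := by
    intro h0
    have hn1 : 0 < n * sbar := Nat.mul_pos (hn ▸ Nat.mul_pos hnbar hu) hsbar0
    have h2 : 0 < orderOf ξ := by omega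
    have h1 := pow_orderOf_eq_one ξ
    generalize hgen : orderOf ξ = K at h1 h2
    rw [h0, zero_pow (by omega : K ≠ 0)] at h1
    exact zero_ne_one h1
  have hipn : iF p < nbar := hiFn p hp
  have hipR : iF p ∉ R' := fun h => hRF _ h p hp rfl
  -- instantiated main lemma
  have key : ∀ m, u - v ≤ m → m < b → ∀ a < sbar ^ nbar,
      (∀ x < sbar, ∑ g ∈ Finset.range u, θ ^ (g * m) * e (iF p * u + g)
          (replaceDigit sbar a (iF p) ((a / sbar ^ (iF p) % sbar + x) % sbar)) ((p + x) % L) = 0)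
      ∧ ∀ i < nbar, i ∉ R' → i ≠ iF p → Hval θ sbar u L (iF p) p i m e a = 0 := by
    intro m hm1 hm2 a ha
    refine mainLemma nbar u kbar dbar v b r sbar L hu hv hb2 hd1 hnk hsbar hL0 hr'
      ξ θ hord hξ0 hθ (iF p) hipn R' hR' hRn hipR p e he m (lt_of_lt_of_le hm2 hb2) a ha ?_
    intro j hj
    rw [show e = fun i a y => c i a y - c' i a y from rfl, Hval_sub,
      hH j hj m hm1 hm2 a ha, sub_self]
  constructor
  · -- part (i)
    intro x hx m hm1 hm2 a ha
    have hdlt : a / sbar ^ (iF p) % sbar < sbar := Nat.mod_lt _ hsbar0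
    set dA := a / sbar ^ (iF p) % sbar with hdA
    set atil := replaceDigit sbar a (iF p) ((dA + (sbar - x)) % sbar) with hatil
    have hatlt : atil < sbar ^ nbar :=
      replaceDigit_lt ha hipn (Nat.mod_lt _ hsbar0)
    have h1 := (key m hm1 hm2 atil hatlt).1 x hx
    have h2 : atil / sbar ^ (iF p) % sbar = (dA + (sbar - x)) % sbar :=
      digit_replaceDigit_self sbar a (iF p) (Nat.mod_lt _ hsbar0)
    have h3 : (atil / sbar ^ (iF p) % sbar + x) % sbar = dA := by
      rw [h2, Nat.mod_add_mod, show dA + (sbar - x) + x = dA + sbar by omega,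
        Nat.add_mod_right, Nat.mod_eq_of_lt hdlt]
    have h4 : replaceDigit sbar atil (iF p) ((atil / sbar ^ (iF p) % sbar + x) % sbar) = a := by
      rw [h3, hatil, replaceDigit_replaceDigit sbar a (iF p) dA (Nat.mod_lt _ hsbar0),
        hdA, replaceDigit_digit]
    rw [h4] at h1
    have h5 : ∑ g ∈ Finset.range u, (θ ^ (g * m) * c (iF p * u + g) a ((p + x) % L)
        - θ ^ (g * m) * c' (iF p * u + g) a ((p + x) % L)) = 0 := by
      rw [← h1]
      exact Finset.sum_congr rfl fun g _ => by rw [he_def]; ring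
    rw [Finset.sum_sub_distrib] at h5
    exact sub_eq_zero.mp h5
  · -- part (ii)
    intro q hq hqp m hm1 hm2 a ha
    have hqn : iF q < nbar := hiFn q hq
    have hqR : iF q ∉ R' := fun h => hRF _ h q hq rfl
    have hqip : iF q ≠ iF p := fun h =>
      hqp (hiF.injOn (Set.mem_Iio.mpr hq) (Set.mem_Iio.mpr hp) h)
    have h1 := (key m hm1 hm2 a ha).2 (iF q) hqn hqR hqip
    rw [show e = fun i a y => c i a y - c' i a y from rfl, Hval_sub] at h1
    exact sub_eq_zero.mp h1
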